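/- Suppose E^s : ℝ³ → ℂ³ satisfies |E^s(x)| ≤ C/|x| for |x| ≥ R, and E = E^i + E^s where E^i(x) = q e^{i k x·d} for a fixed q ∈ ℂ³, unit vector d, and k > 0. If S ⊂ ℝ³ is unbounded and ν × E(x) = 0 for all x ∈ S (ν a fixed unit vector), then ν × q = 0. -/

import Mathlib

/-- Componentwise complex cross product on ℂ³. -/
noncomputable def cross3C (a b : EuclideanSpace ℂ (Fin 3)) : EuclideanSpace ℂ (Fin 3) :=
  (WithLp.equiv 2 (Fin 3 → ℂ)).symm
    (crossProduct ((WithLp.equiv 2 (Fin 3 → ℂ)) a) ((WithLp.equiv 2 (Fin 3 → ℂ)) b))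

/-- Complexification of a real vector in ℝ³. -/
noncomputable def toC3 (v : EuclideanSpace ℝ (Fin 3)) : EuclideanSpace ℂ (Fin 3) :=
  (WithLp.equiv 2 (Fin 3 → ℂ)).symm (fun i => (v i : ℂ))

/-- Cross product with a fixed left factor as a linear map. -/
noncomputable def crossL (a : EuclideanSpace ℂ (Fin 3)) :
    EuclideanSpace ℂ (Fin 3) →ₗ[ℂ] EuclideanSpace ℂ (Fin 3) where
  toFun := cross3C a
  map_add' b c := by
    simp [cross3C, map_add]
  map_smul' r b := by
    simp [cross3C, map_smul]

lemma crossL_apply (a b : EuclideanSpace ℂ (Fin 3)) : crossL a b = cross3C a b := rfl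

/-- if the scattered field decays like `C/|x|`, the incident field is the
plane wave `q e^{i k x·d}`, and the tangential component `ν × (Eⁱ + Eˢ)` vanishes on an
unbounded set `S`, then `ν × q = 0`. -/
theorem stmt11 (Es : EuclideanSpace ℝ (Fin 3) → EuclideanSpace ℂ (Fin 3))
    (C R : ℝ) (hdecay : ∀ x : EuclideanSpace ℝ (Fin 3), R ≤ ‖x‖ → ‖Es x‖ ≤ C / ‖x‖)
    (q : EuclideanSpace ℂ (Fin 3)) (d : EuclideanSpace ℝ (Fin 3)) (hd : ‖d‖ = 1)
    (k : ℝ) (hk : 0 < k)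
    (Ei E : EuclideanSpace ℝ (Fin 3) → EuclideanSpace ℂ (Fin 3))
    (hEi : ∀ x, Ei x = Complex.exp (Complex.I * k * ((inner ℝ x d : ℝ) : ℂ)) • q)
    (hE : ∀ x, E x = Ei x + Es x)
    (S : Set (EuclideanSpace ℝ (Fin 3))) (hS : ¬ Bornology.IsBounded S)
    (ν : EuclideanSpace ℝ (Fin 3)) (hν : ‖ν‖ = 1)
    (hvanish : ∀ x ∈ S, cross3C (toC3 ν) (E x) = 0) :
    cross3C (toC3 ν) q = 0 := by
  set Lc : EuclideanSpace ℂ (Fin 3) →L[ℂ] EuclideanSpace ℂ (Fin 3) :=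
    (crossL (toC3 ν)).toContinuousLinearMap with hLc
  set K : ℝ := ‖Lc‖ with hK
  have hunb : ∀ r : ℝ, ∃ x ∈ S, r < ‖x‖ := by
    intro r
    by_contra h
    push_neg at h
    exact hS (isBounded_iff_forall_norm_le.2 ⟨r, fun x hx => (h x hx)⟩)
  have key : ∀ ε : ℝ, 0 < ε → ‖cross3C (toC3 ν) q‖ ≤ 0 + ε := by
    intro ε hε
    obtain ⟨x, hxS, hx⟩ := hunb (max R (max 1 (K * C / ε)))
    have hxR : R ≤ ‖x‖ := le_trans (le_max_left _ _) hx.le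
    have hx1 : (1 : ℝ) < ‖x‖ := lt_of_le_of_lt (le_trans (le_max_left _ _) (le_max_right _ _)) hx
    have hxpos : (0 : ℝ) < ‖x‖ := lt_trans one_pos hx1
    have hxKC : K * C / ε ≤ ‖x‖ := le_trans (le_trans (le_max_right _ _) (le_max_right _ _)) hx.le
    -- the phase has norm 1
    set c : ℂ := Complex.exp (Complex.I * k * ((inner ℝ x d : ℝ) : ℂ)) with hc
    have hcnorm : ‖c‖ = 1 := by
      rw [hc, Complex.norm_exp]
      have : (Complex.I * k * ((inner ℝ x d : ℝ) : ℂ)).re = 0 := by simp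
      rw [this, Real.exp_zero]
    -- cross with Ei x
    have hcross : cross3C (toC3 ν) (Ei x) = c • cross3C (toC3 ν) q := by
      rw [hEi x, ← hc, ← crossL_apply, map_smul, crossL_apply]
    have hsum : cross3C (toC3 ν) (Ei x) + cross3C (toC3 ν) (Es x) = 0 := by
      have := hvanish x hxS
      rw [hE x, ← crossL_apply, map_add, crossL_apply, crossL_apply] at this
      exact this
    have hnormEq : ‖cross3C (toC3 ν) q‖ = ‖cross3C (toC3 ν) (Es x)‖ := by
      have h1 : cross3C (toC3 ν) (Ei x) = -cross3C (toC3 ν) (Es x) :=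
        eq_neg_of_add_eq_zero_left hsum
      have h2 : ‖cross3C (toC3 ν) (Ei x)‖ = ‖cross3C (toC3 ν) q‖ := by
        rw [hcross, norm_smul, hcnorm, one_mul]
      rw [← h2, h1, norm_neg]
    have hKnn : (0:ℝ) ≤ K := norm_nonneg _
    have hbound : ‖cross3C (toC3 ν) (Es x)‖ ≤ K * (C / ‖x‖) := by
      calc ‖cross3C (toC3 ν) (Es x)‖ = ‖Lc (Es x)‖ := rfl
        _ ≤ K * ‖Es x‖ := Lc.le_opNorm _
        _ ≤ K * (C / ‖x‖) := mul_le_mul_of_nonneg_left (hdecay x hxR) hKnn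
    have hfin : K * (C / ‖x‖) ≤ ε := by
      rcases le_or_gt (K * C) 0 with h | h
      · have : K * (C / ‖x‖) ≤ 0 := by
          rw [mul_div_assoc'] at *
          exact div_nonpos_of_nonpos_of_nonneg h hxpos.le
        linarith
      · rw [mul_div_assoc']
        rw [div_le_iff₀ hxpos]
        have := (div_le_iff₀ hε).mp (le_of_eq rfl : K * C / ε ≤ K * C / ε)
        calc K * C = (K * C / ε) * ε := by field_simp
          _ ≤ ‖x‖ * ε := by
              apply mul_le_mul_of_nonneg_right hxKC hε.le
          _ = ε * ‖x‖ := mul_comm _ _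
    rw [hnormEq, zero_add]
    exact le_trans hbound hfin
  have : ‖cross3C (toC3 ν) q‖ ≤ 0 := le_of_forall_pos_le_add (by
    intro ε hε; exact key ε hε)
  exact norm_le_zero_iff.mp this
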